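/- Let R be a noetherian commutative ring in which a prime p is nilpotent, H a locally pro-p group, J an open pro-p subgroup of H, and M a smooth R-representation of H such that multiplication by p on M is nilpotent. Then the following are equivalent: (i) M is admissible (M^{J'} is finitely generated over R for every open compact subgroup J' of H); (ii) M^J is finitely generated over R; (iii) M^J ∩ Ker(p : M → M) is finitely generated over R/pR. -/

import Mathlib

/-- The submodule of vectors fixed by a subgroup `J'` under a representation `ρ`. -/
def fixedSub {R H M : Type*} [CommRing R] [Group H] [AddCommGroup M] [Module R M]
    (ρ : Representation R H M) (J' : Subgroup H) : Submodule R M where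
  carrier := {m | ∀ u ∈ J', ρ u m = m}
  zero_mem' := by intro u _; simp
  add_mem' := by intro a b ha hb u hu; rw [map_add, ha u hu, hb u hu]
  smul_mem' := by intro c a ha u hu; rw [map_smul, ha u hu]

section Helpers

variable {R M : Type*} [CommRing R] [IsNoetherianRing R] [AddCommGroup M] [Module R M]

/-- Over a noetherian ring, a submodule contained in a f.g. submodule is f.g. -/
lemma fgOfLe {A B : Submodule R M} (hA : A.FG) (h : B ≤ A) : B.FG := by
  haveI := isNoetherian_of_fg_of_noetherian A hA
  have h1 : (B.comap A.subtype).FG := IsNoetherian.noetherian _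
  have h2 : (B.comap A.subtype).map A.subtype = B := by
    rw [Submodule.map_comap_subtype, inf_eq_right.mpr h]
  rw [← h2]
  exact h1.map _

/-- If `T` is nilpotent on a submodule `S` which it preserves, and `S ⊓ ker T` is f.g.,
then `S` is f.g. (over a noetherian ring). -/
lemma fgOfKerFg (S : Submodule R M) (T : M →ₗ[R] M) (hT : ∀ x ∈ S, T x ∈ S)
    (m : ℕ) (hnil : ∀ x ∈ S, (T ^ m) x = 0)
    (hker : (S ⊓ LinearMap.ker T).FG) : S.FG := by
  have key : ∀ k : ℕ, (S ⊓ LinearMap.ker (T ^ k)).FG := by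
    intro k
    induction k with
    | zero =>
        have : S ⊓ LinearMap.ker ((T : M →ₗ[R] M) ^ 0) = ⊥ := by
          rw [pow_zero]
          ext x
          simp [LinearMap.mem_ker, Module.End.one_apply]
          intro h; simp [h]
        rw [this]; exact Submodule.fg_bot
    | succ k ih =>
        apply Submodule.fg_of_fg_map_of_fg_inf_ker T
        · apply fgOfLe ih
          rintro y ⟨x, ⟨hxS, hxk⟩, rfl⟩
          refine ⟨hT x hxS, ?_⟩
          have : (T ^ k) (T x) = (T ^ (k + 1)) x := by
            rw [pow_succ, Module.End.mul_apply]
          show T x ∈ LinearMap.ker (T ^ k)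
          rw [LinearMap.mem_ker, this]
          exact hxk
        · have heq : S ⊓ LinearMap.ker (T ^ (k + 1)) ⊓ LinearMap.ker T
              = S ⊓ LinearMap.ker T := by
            rw [inf_assoc]
            congr 1
            rw [inf_eq_right]
            intro x hx
            rw [LinearMap.mem_ker] at hx ⊢
            rw [pow_succ, Module.End.mul_apply, hx, map_zero]
          rw [heq]; exact hker
  have hle : S ≤ LinearMap.ker (T ^ m) := fun x hx => hnil x hx
  have := key m
  rwa [inf_eq_left.mpr hle] at this

end Helpers

/-- The stabilizer of a vector, as a subgroup. -/
def repStab {R H M : Type*} [CommRing R] [Group H] [AddCommGroup M] [Module R M]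
    (ρ : Representation R H M) (m : M) : Subgroup H where
  carrier := {h | ρ h m = m}
  one_mem' := by simp
  mul_mem' := by
    intro a b ha hb
    simp only [Set.mem_setOf_eq] at *
    rw [map_mul, Module.End.mul_apply, hb, ha]
  inv_mem' := by
    intro a ha
    simp only [Set.mem_setOf_eq] at *
    have := congrArg (ρ a⁻¹) ha
    rw [← Module.End.mul_apply, ← map_mul, inv_mul_cancel, map_one, Module.End.one_apply] at this
    exact this.symm

open Polynomial in
lemma polyFact (p : ℕ) [Fact p.Prime] :
    ∃ Q : Polynomial ℤ, (X - 1 : Polynomial ℤ) ^ p = (X ^ p - 1) + C (p : ℤ) * Q := by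
  haveI : CharP (Polynomial (ZMod p)) p :=
    charP_of_injective_algebraMap (by
      rw [Polynomial.algebraMap_eq]; exact Polynomial.C_injective) p
  have hdvd : (C (p : ℤ)) ∣ ((X - 1 : Polynomial ℤ) ^ p - (X ^ p - 1)) := by
    rw [Polynomial.C_dvd_iff_dvd_coeff]
    intro i
    have hmap : ((X - 1 : Polynomial ℤ) ^ p - (X ^ p - 1)).map
        (Int.castRingHom (ZMod p)) = 0 := by
      rw [Polynomial.map_sub, Polynomial.map_pow, Polynomial.map_sub, Polynomial.map_sub,
        Polynomial.map_pow, Polynomial.map_one, Polynomial.map_X, sub_pow_char]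
      simp
    have h2 := congrArg (fun q => Polynomial.coeff q i) hmap
    simp only [Polynomial.coeff_map, Polynomial.coeff_zero] at h2
    exact (ZMod.intCast_zmod_eq_zero_iff_dvd _ p).mp (by exact_mod_cast h2)
  obtain ⟨Q, hQ⟩ := hdvd
  exact ⟨Q, by linear_combination hQ⟩

lemma mainInd (p : ℕ) [Fact p.Prime] {R : Type*} [CommRing R] [IsNoetherianRing R]
    {H : Type*} [Group H] [TopologicalSpace H] [IsTopologicalGroup H]
    (J : Subgroup H)
    (hJp : ∀ U : Subgroup J, IsOpen (U : Set J) → ∃ n : ℕ, U.index = p ^ n)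
    {M : Type*} [AddCommGroup M] [Module R M] (ρ : Representation R H M)
    (n : ℕ) (hn : ∀ m : M, (p : R) ^ n • m = 0)
    (hfg : (fixedSub ρ J).FG) :
    ∀ N : ℕ, ∀ V : Subgroup H, V ≤ J → (∀ j ∈ J, ∀ x ∈ V, j * x * j⁻¹ ∈ V) →
      IsOpen (V : Set H) → (V.subgroupOf J).index = N → (fixedSub ρ V).FG := by
  intro N
  induction N using Nat.strong_induction_on with
  | _ N ih =>
  intro V hVJ hVn hVo hVi
  have hUo : IsOpen ((V.subgroupOf J : Subgroup J) : Set J) := by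
    have : ((V.subgroupOf J : Subgroup J) : Set J) = (Subtype.val : J → H) ⁻¹' V := rfl
    rw [this]
    exact hVo.preimage continuous_subtype_val
  obtain ⟨k, hk⟩ := hJp (V.subgroupOf J) hUo
  cases k with
  | zero =>
    rw [pow_zero] at hk
    have hJV : J ≤ V := Subgroup.subgroupOf_eq_top.mp (Subgroup.index_eq_one.mp hk)
    rw [le_antisymm hVJ hJV]
    exact hfg
  | succ k =>
    have hp1 : 1 < p := (Fact.out (p := p.Prime)).one_lt
    haveI hUnormal : (V.subgroupOf J).Normal := by
      constructor
      rintro ⟨x, hxJ⟩ hx ⟨j, hjJ⟩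
      rw [Subgroup.mem_subgroupOf] at hx ⊢
      exact hVn j hjJ x hx
    have hcard : Nat.card (J ⧸ V.subgroupOf J) = p ^ (k + 1) := by
      rw [← Subgroup.index_eq_card, hk]
    haveI : Finite (J ⧸ V.subgroupOf J) :=
      Nat.finite_of_card_ne_zero (by rw [hcard]; positivity)
    haveI : Nontrivial (J ⧸ V.subgroupOf J) := by
      rw [← Finite.one_lt_card_iff_nontrivial, hcard]
      exact Nat.one_lt_pow (Nat.succ_ne_zero k) hp1
    have hQp : IsPGroup p (J ⧸ V.subgroupOf J) := IsPGroup.of_card hcard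
    haveI := hQp.center_nontrivial
    haveI : Fintype (Subgroup.center (J ⧸ V.subgroupOf J)) := Fintype.ofFinite _
    have hdvd : p ∣ Fintype.card (Subgroup.center (J ⧸ V.subgroupOf J)) := by
      obtain ⟨m, hm⟩ := (IsPGroup.iff_card (p := p)
          (G := Subgroup.center (J ⧸ V.subgroupOf J))).mp (hQp.to_subgroup _)
      cases m with
      | zero =>
        exfalso
        rw [pow_zero] at hm
        exact (Finite.one_lt_card_iff_nontrivial.mpr inferInstance).ne' hm
      | succ m =>
        rw [Fintype.card_eq_nat_card, hm]
        exact dvd_pow_self p (Nat.succ_ne_zero m)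
    obtain ⟨z, hz⟩ := exists_prime_orderOf_dvd_card p hdvd
    have hzQ : orderOf (z : J ⧸ V.subgroupOf J) = p := by
      rw [← hz]
      exact orderOf_injective (Subgroup.center _).subtype (Subgroup.subtype_injective _) z
    obtain ⟨g₀, hg₀⟩ := QuotientGroup.mk_surjective (z : J ⧸ V.subgroupOf J)
    set g : H := (g₀ : H) with hgdef
    have hgJ : g ∈ J := g₀.2
    have hzne : (z : J ⧸ V.subgroupOf J) ≠ 1 := by
      intro h
      rw [h, orderOf_one] at hzQ
      omega
    have hgV : g ∉ V := by
      intro h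
      exact hzne (hg₀ ▸ (QuotientGroup.eq_one_iff g₀).mpr (Subgroup.mem_subgroupOf.mpr h))
    have hgpV : g ^ p ∈ V := by
      have h1 : ((g₀ ^ p : J) : J ⧸ V.subgroupOf J) = 1 := by
        have : ((g₀ ^ p : J) : J ⧸ V.subgroupOf J)
            = ((g₀ : J ⧸ V.subgroupOf J)) ^ p := rfl
        rw [this, hg₀, ← hzQ, pow_orderOf_eq_one]
      have h2 := (QuotientGroup.eq_one_iff _).mp h1
      rw [Subgroup.mem_subgroupOf] at h2
      exact_mod_cast h2
    have hcentral : ∀ j ∈ J, j * g * j⁻¹ * g⁻¹ ∈ V := by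
      intro j hj
      have h1 : ((((⟨j, hj⟩ : J) * g₀ * (⟨j, hj⟩ : J)⁻¹ * g₀⁻¹ : J)) : J ⧸ V.subgroupOf J) = 1 := by
        have hzc := z.2
        rw [Subgroup.mem_center_iff] at hzc
        show ((⟨j, hj⟩ : J) : J ⧸ V.subgroupOf J) * (g₀ : J ⧸ V.subgroupOf J)
            * ((⟨j, hj⟩ : J) : J ⧸ V.subgroupOf J)⁻¹ * (g₀ : J ⧸ V.subgroupOf J)⁻¹ = 1
        rw [hg₀, hzc (((⟨j, hj⟩ : J) : J ⧸ V.subgroupOf J))]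
        group
      have h2 := (QuotientGroup.eq_one_iff _).mp h1
      rw [Subgroup.mem_subgroupOf] at h2
      exact_mod_cast h2
    set K : Subgroup H := V ⊔ Subgroup.zpowers g with hKdef
    have hVK : V ≤ K := le_sup_left
    have hgK : g ∈ K := (le_sup_right : Subgroup.zpowers g ≤ K) (Subgroup.mem_zpowers g)
    have hKJ : K ≤ J := sup_le hVJ (Subgroup.zpowers_le.mpr hgJ)
    have hKo : IsOpen (K : Set H) := Subgroup.isOpen_mono hVK hVo
    have hKn : ∀ j ∈ J, ∀ x ∈ K, j * x * j⁻¹ ∈ K := by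
      intro j hj x hx
      have hmap : K.map (MulAut.conj j).toMonoidHom ≤ K := by
        rw [hKdef, Subgroup.map_sup]
        apply sup_le
        · rintro _ ⟨v, hv, rfl⟩
          exact hVK (by simpa [MulAut.conj_apply] using hVn j hj v hv)
        · rw [MonoidHom.map_zpowers, Subgroup.zpowers_le]
          have h1 : j * g * j⁻¹ * g⁻¹ ∈ K := hVK (hcentral j hj)
          have h2 := mul_mem h1 hgK
          simpa [MulAut.conj_apply, mul_assoc] using h2
      have h3 : (MulAut.conj j) x ∈ K.map (MulAut.conj j).toMonoidHom :=
        Subgroup.mem_map_of_mem _ hx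
      simpa [MulAut.conj_apply] using hmap h3
    have hUK : V.subgroupOf J ≤ K.subgroupOf J := Subgroup.comap_mono hVK
    have hrel := Subgroup.relIndex_mul_index hUK
    have hUne : (V.subgroupOf J).index ≠ 0 := by rw [hk]; positivity
    have hKine : (K.subgroupOf J).index ≠ 0 := by
      intro h
      rw [h, mul_zero] at hrel
      exact hUne hrel.symm
    have hne1 : (V.subgroupOf J).relIndex (K.subgroupOf J) ≠ 1 := by
      intro h
      have hle := Subgroup.relIndex_eq_one.mp h
      exact hgV (Subgroup.mem_subgroupOf.mp
        (hle (Subgroup.mem_subgroupOf.mpr hgK : g₀ ∈ K.subgroupOf J)))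
    have hrne0 : (V.subgroupOf J).relIndex (K.subgroupOf J) ≠ 0 := by
      intro h
      rw [h, zero_mul] at hrel
      exact hUne hrel.symm
    have hlt : (K.subgroupOf J).index < N := by
      rw [← hVi, ← hrel]
      have hpos : 0 < (K.subgroupOf J).index := Nat.pos_of_ne_zero hKine
      have h3 : 1 * (K.subgroupOf J).index
          < (V.subgroupOf J).relIndex (K.subgroupOf J) * (K.subgroupOf J).index :=
        (Nat.mul_lt_mul_right hpos).mpr (by omega)
      rwa [one_mul] at h3
    have hKfg : (fixedSub ρ K).FG := ih _ hlt K hKJ hKn hKo rfl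
    -- Now the module-theoretic step
    set S : Submodule R M := fixedSub ρ V with hSdef
    set a : Module.End R M := ρ g with hadef
    have haS : ∀ x ∈ S, a x ∈ S := by
      intro x hx u hu
      have h1 : g⁻¹ * u * g ∈ V := by
        have := hVn g⁻¹ (inv_mem hgJ) u hu
        simpa using this
      have hcalc : (ρ u) (a x) = a ((ρ (g⁻¹ * u * g)) x) := by
        rw [hadef, ← Module.End.mul_apply, ← map_mul, ← Module.End.mul_apply, ← map_mul]
        congr 2
        group
      rw [hcalc, hx _ h1]
    have hapS : ∀ x ∈ S, (a ^ p) x = x := by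
      intro x hx
      have h1 : a ^ p = ρ (g ^ p) := (map_pow ρ g p).symm
      rw [h1]
      exact hx _ hgpV
    have hpowS : ∀ i : ℕ, ∀ x ∈ S, (a ^ i) x ∈ S := by
      intro i
      induction i with
      | zero => intro x hx; simpa using hx
      | succ i ihi =>
        intro x hx
        rw [pow_succ, Module.End.mul_apply]
        exact ihi _ (haS x hx)
    have hpoly : ∀ Q : Polynomial ℤ, ∀ x ∈ S, (Polynomial.aeval a Q) x ∈ S := by
      intro Q
      induction Q using Polynomial.induction_on' with
      | add f g hf hg =>
        intro x hx
        rw [map_add, LinearMap.add_apply]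
        exact S.add_mem (hf x hx) (hg x hx)
      | monomial i c =>
        intro x hx
        rw [Polynomial.aeval_monomial, Module.End.mul_apply]
        have h1 : (algebraMap ℤ (Module.End R M) c) ((a ^ i) x) = c • ((a ^ i) x) := by
          rw [algebraMap_int_eq]
          exact Module.End.intCast_apply c _
        rw [h1]
        exact S.toAddSubgroup.zsmul_mem (hpowS i x hx) c
    obtain ⟨Qp, hQp⟩ := polyFact p
    set b : Module.End R M := Polynomial.aeval a Qp with hbdef
    set t : Module.End R M := a - 1 with htdef
    have htS : ∀ x ∈ S, t x ∈ S := by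
      intro x hx
      rw [htdef, LinearMap.sub_apply, Module.End.one_apply]
      exact S.sub_mem (haS x hx) hx
    have hbS : ∀ x ∈ S, b x ∈ S := fun x hx => hpoly Qp x hx
    have hkey : ∀ x ∈ S, (t ^ p) x = (p : R) • b x := by
      have h1 : t ^ p = (a ^ p - 1) + (algebraMap ℤ (Module.End R M) (p : ℤ)) * b := by
        have h2 := congrArg (Polynomial.aeval a) hQp
        simp only [map_add, map_sub, map_pow, map_mul, Polynomial.aeval_X,
          Polynomial.aeval_one, Polynomial.aeval_C] at h2
        rw [htdef, hbdef]
        exact h2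
      have h3 : ∀ y : M, (algebraMap ℤ (Module.End R M) (p : ℤ)) y = (p : R) • y := by
        intro y
        rw [algebraMap_int_eq]
        have h4 := Module.End.intCast_apply (R := R) (N₁ := M) (p : ℤ) y
        rw [show ((Int.castRingHom (Module.End R M)) (p : ℤ))
            = (((p : ℤ) : Module.End R M)) from rfl, h4, ← Int.cast_smul_eq_zsmul R]
        norm_num
      intro x hx
      rw [h1, LinearMap.add_apply, LinearMap.sub_apply, Module.End.one_apply, hapS x hx,
        sub_self, zero_add, Module.End.mul_apply, h3]
    have hiter : ∀ k : ℕ, ∀ x ∈ S, ((t ^ p) ^ k) x = (p : R) ^ k • (b ^ k) x ∧ (b ^ k) x ∈ S := by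
      intro k
      induction k with
      | zero => intro x hx; simpa using hx
      | succ k ihk =>
        intro x hx
        obtain ⟨h1, h2⟩ := ihk x hx
        have hb1 : (b ^ (k + 1)) x = b ((b ^ k) x) := by
          rw [pow_succ', Module.End.mul_apply]
        constructor
        · rw [pow_succ', Module.End.mul_apply, h1, map_smul, hkey _ h2, smul_smul, hb1,
            pow_succ', mul_comm ((p : R) ^ k) (p : R)]
        · rw [hb1]
          exact hbS _ h2
    have hnilt : ∀ x ∈ S, (t ^ (p * n)) x = 0 := by
      intro x hx
      rw [pow_mul, (hiter n x hx).1, hn]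
    have hkerK : S ⊓ LinearMap.ker t = fixedSub ρ K := by
      ext x
      simp only [Submodule.mem_inf, LinearMap.mem_ker]
      constructor
      · rintro ⟨hxS, hxt⟩
        have hfix : (ρ g) x = x := by
          rw [htdef, LinearMap.sub_apply, Module.End.one_apply] at hxt
          exact sub_eq_zero.mp hxt
        intro u hu
        have hle : K ≤ repStab ρ x :=
          sup_le (fun v hv => hxS v hv) (Subgroup.zpowers_le.mpr hfix)
        exact hle hu
      · intro hx
        refine ⟨fun v hv => hx v (hVK hv), ?_⟩
        rw [htdef, LinearMap.sub_apply, Module.End.one_apply]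
        rw [show a x = x from hx g hgK]
        exact sub_self x
    refine fgOfKerFg S t htS (p * n) hnilt ?_
    rw [hkerK]
    exact hKfg

lemma fixedSub_mono {R H M : Type*} [CommRing R] [Group H] [AddCommGroup M] [Module R M]
    (ρ : Representation R H M) {V W : Subgroup H} (h : V ≤ W) :
    fixedSub ρ W ≤ fixedSub ρ V := fun x hx u hu => hx u (h hu)

/-- Let `R` be a noetherian commutative ring in which the prime `p` is nilpotent, `H` a
locally pro-`p` group with open compact pro-`p` subgroup `J` (pro-`p`: every open
subgroup of `J` has `p`-power index), and `M` a smooth `R`-representation of `H` on which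
multiplication by `p` is nilpotent.  Then the following are equivalent:
(i) `M` is admissible, i.e. `M^{J'}` is finitely generated over `R` for every compact
open subgroup `J'` of `H`; (ii) `M^J` is finitely generated over `R`;
(iii) `M^J ∩ Ker(p : M → M)` is finitely generated over `R/pR` (equivalently, since `p`
kills it, finitely generated over `R`). -/
theorem stmt19 (p : ℕ) [Fact p.Prime] {R : Type*} [CommRing R] [IsNoetherianRing R]
    (hpR : IsNilpotent (p : R))
    {H : Type*} [Group H] [TopologicalSpace H] [IsTopologicalGroup H]
    (J : Subgroup H) (hJo : IsOpen (J : Set H)) (hJc : IsCompact (J : Set H))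
    (hJp : ∀ U : Subgroup J, IsOpen (U : Set J) → ∃ n : ℕ, U.index = p ^ n)
    {M : Type*} [AddCommGroup M] [Module R M] (ρ : Representation R H M)
    (hsmooth : ∀ m : M, ∃ U : Subgroup H, IsOpen (U : Set H) ∧ ∀ u ∈ U, ρ u m = m)
    (hnilM : ∃ n : ℕ, ∀ m : M, (p : R) ^ n • m = 0) :
    ((∀ J' : Subgroup H, IsOpen (J' : Set H) → IsCompact (J' : Set H) →
        (fixedSub ρ J').FG) ↔ (fixedSub ρ J).FG) ∧
    ((fixedSub ρ J).FG ↔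
      (fixedSub ρ J ⊓ LinearMap.ker ((p : R) • (LinearMap.id : M →ₗ[R] M))).FG) := by
  obtain ⟨n, hn⟩ := hnilM
  constructor
  · constructor
    · intro h
      exact h J hJo hJc
    · intro hfg J' hJ'o hJ'c
      set U0 : Subgroup J := (J ⊓ J').subgroupOf J with hU0
      have hU0o : IsOpen (U0 : Set J) := by
        have h1 : (U0 : Set J) = (Subtype.val : J → H) ⁻¹' ((J ⊓ J' : Subgroup H) : Set H) := rfl
        have h2 : ((J ⊓ J' : Subgroup H) : Set H) = (J : Set H) ∩ (J' : Set H) := rfl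
        rw [h1, h2]
        exact (hJo.inter hJ'o).preimage continuous_subtype_val
      haveI : U0.FiniteIndex := by
        constructor
        obtain ⟨k, hk⟩ := hJp U0 hU0o
        have : 0 < p := (Fact.out (p := p.Prime)).pos
        rw [hk]
        positivity
      set C : Subgroup J := U0.normalCore with hC
      have hCc : IsClosed (C : Set J) :=
        Subgroup.normalCore_isClosed _ (U0.isClosed_of_isOpen hU0o)
      have hCo : IsOpen (C : Set J) := Subgroup.isOpen_of_isClosed_of_finiteIndex _ hCc
      set V : Subgroup H := C.map J.subtype with hV
      have hVJ : V ≤ J := Subgroup.map_subtype_le _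
      have hVJ' : V ≤ J' := by
        rintro x ⟨c, hc, rfl⟩
        have h3 := U0.normalCore_le hc
        rw [hU0, Subgroup.mem_subgroupOf] at h3
        exact h3.2
      have hVn : ∀ j ∈ J, ∀ x ∈ V, j * x * j⁻¹ ∈ V := by
        intro j hj x hx
        obtain ⟨c, hc, rfl⟩ := hx
        have hcn : (⟨j, hj⟩ : J) * c * (⟨j, hj⟩ : J)⁻¹ ∈ C :=
          (Subgroup.normalCore_normal U0).conj_mem c hc _
        exact ⟨_, hcn, rfl⟩
      have hVo : IsOpen (V : Set H) := by
        have h4 : (V : Set H) = (Subtype.val : J → H) '' (C : Set J) := rfl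
        rw [h4]
        exact hJo.isOpenMap_subtype_val _ hCo
      have hfgV : (fixedSub ρ V).FG :=
        mainInd p J hJp ρ n hn hfg _ V hVJ hVn hVo rfl
      exact fgOfLe hfgV (fixedSub_mono ρ hVJ')
  · constructor
    · intro hfg
      exact fgOfLe hfg inf_le_left
    · intro hker
      refine fgOfKerFg (fixedSub ρ J) ((p : R) • (LinearMap.id : M →ₗ[R] M)) ?_ n ?_ hker
      · intro x hx
        rw [LinearMap.smul_apply, LinearMap.id_apply]
        exact Submodule.smul_mem _ _ hx
      · intro x hx
        have h5 : ((p : R) • (LinearMap.id : M →ₗ[R] M)) ^ n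
            = (p : R) ^ n • ((LinearMap.id : M →ₗ[R] M) ^ n) := smul_pow _ _ _
        rw [h5]
        have h6 : ((LinearMap.id : M →ₗ[R] M) ^ n) x = x := by
          simp [Module.End.pow_apply]
        rw [LinearMap.smul_apply, h6]
        exact hn x
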